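/- Let $\sigma > 0$, $q \geq 0$, and let $D_1, D_2, \ldots$ be independent nonnegative random variables with $\mathbb{P}(D_i \geq x) \leq \exp(-x^{1+q}/(2\sigma^2))$ for all $x \geq 1$ and all $i$. Define $V = \sum_{i=1}^{\infty} \mathbb{I}(D_i \geq i)$. Then for every integer $j \geq 1$, $\mathbb{P}(V \geq j) \leq (2\sigma^2 + 1)^j \exp\left(-\frac{(j-1)^{2+q}}{2(2+q)\sigma^2}\right)$. -/

import Mathlib

open MeasureTheory ProbabilityTheory
open scoped ENNReal

lemma my_rpow_gap {q x y : ℝ} (hq : 0 ≤ q) (hy : 1 ≤ y) (hxy : y ≤ x) :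
    y ^ (1 + q) + (x - y) ≤ x ^ (1 + q) := by
  have hy0 : (0:ℝ) ≤ y := by linarith
  have hx0 : (0:ℝ) ≤ x := by linarith
  have h1 : x * y ^ q ≤ x ^ (1 + q) := by
    rw [Real.rpow_add' hx0 (by linarith), Real.rpow_one]
    exact mul_le_mul_of_nonneg_left (Real.rpow_le_rpow hy0 hxy hq) hx0
  have h2 : (1:ℝ) ≤ y ^ q := Real.one_le_rpow hy hq
  have h3 : y ^ (1 + q) = y * y ^ q := by
    rw [Real.rpow_add' hy0 (by linarith), Real.rpow_one]
  nlinarith [Real.rpow_nonneg hy0 q]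

lemma my_bernoulli_step {q m : ℝ} (hq : 0 ≤ q) (hm : 0 ≤ m) :
    (m + 1) ^ (2 + q) - (2 + q) * (m + 1) ^ (1 + q) ≤ m ^ (2 + q) := by
  have hm1 : (0:ℝ) < m + 1 := by linarith
  have hb := one_add_mul_self_le_rpow_one_add
    (show (-1:ℝ) ≤ -(1/(m+1)) by rw [neg_le_neg_iff]; rw [div_le_one hm1]; linarith)
    (show (1:ℝ) ≤ 2 + q by linarith)
  have he : (1 + -(1/(m+1))) = m / (m+1) := by field_simp; ring
  rw [he] at hb
  have h2 : (m / (m+1)) ^ (2+q) = m ^ (2+q) / (m+1) ^ (2+q) := by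
    rw [Real.div_rpow hm (le_of_lt hm1)]
  rw [h2] at hb
  have h3 : (m+1) ^ (2+q) = (m+1) * (m+1) ^ (1+q) := by
    have : (2:ℝ) + q = 1 + (1+q) := by ring
    rw [this, Real.rpow_add hm1, Real.rpow_one]
  have hpos : (0:ℝ) < (m+1) ^ (2+q) := Real.rpow_pos_of_pos hm1 _
  have hthis := mul_le_mul_of_nonneg_right hb (le_of_lt hpos)
  rw [div_mul_cancel₀ _ (ne_of_gt hpos)] at hthis
  have key : (1 + (2+q) * -(1/(m+1))) * ((m+1) * (m+1)^(1+q))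
      = ((m+1)-(2+q)) * (m+1)^(1+q) := by field_simp; ring
  rw [h3, key] at hthis
  nlinarith

lemma my_sum_pow_lower {q : ℝ} (hq : 0 ≤ q) (j : ℕ) :
    (j:ℝ) ^ (2 + q) ≤ (2 + q) * ∑ k ∈ Finset.range j, ((k:ℝ) + 1) ^ (1 + q) := by
  induction j with
  | zero => simp [Real.zero_rpow (by positivity : (2:ℝ)+q ≠ 0)]
  | succ n ih =>
    rw [Finset.sum_range_succ, mul_add]
    have hb := my_bernoulli_step hq (Nat.cast_nonneg n : (0:ℝ) ≤ n)
    push_cast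
    linarith

lemma my_tsum_pi_prod : ∀ (n : ℕ) (h : Fin n → ℕ → ℝ≥0∞),
    ∑' g : Fin n → ℕ, ∏ k, h k (g k) = ∏ k, ∑' i, h k i := by
  intro n
  induction n with
  | zero =>
    intro h
    simp only [Finset.univ_eq_empty, Finset.prod_empty]
    exact tsum_eq_single default fun b hb => absurd (Subsingleton.elim b default) hb
  | succ n ih =>
    intro h
    rw [← (Fin.consEquiv (fun _ => ℕ)).tsum_eq]
    have : ∀ p : ℕ × (Fin n → ℕ),
        (∏ k, h k ((Fin.consEquiv (fun _ => ℕ) p) k))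
        = h 0 p.1 * ∏ k : Fin n, h k.succ (p.2 k) := by
      intro p
      rw [Fin.prod_univ_succ]
      rfl
    rw [tsum_congr this, ENNReal.tsum_prod']
    simp_rw [ENNReal.tsum_mul_left]
    rw [ENNReal.tsum_mul_right, ih (fun k i => h k.succ i), Fin.prod_univ_succ]

lemma my_tail_sum {σ q : ℝ} (hσ : 0 < σ) (hq : 0 ≤ q) (k : ℕ) :
    ∑' i : ℕ, (if k ≤ i then
        ENNReal.ofReal (Real.exp (-((i:ℝ)+1) ^ (1+q) / (2*σ^2))) else 0)
      ≤ ENNReal.ofReal ((2*σ^2+1) * Real.exp (-((k:ℝ)+1) ^ (1+q) / (2*σ^2))) := by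
  set f : ℕ → ℝ≥0∞ := fun i => if k ≤ i then
      ENNReal.ofReal (Real.exp (-((i:ℝ)+1) ^ (1+q) / (2*σ^2))) else 0 with hf
  have hs : (0:ℝ) < 2*σ^2 := by positivity
  set r : ℝ := Real.exp (-(1/(2*σ^2))) with hr
  have hr0 : 0 < r := Real.exp_pos _
  have hr1 : r < 1 := by
    rw [hr, Real.exp_lt_one_iff]
    simp only [neg_lt, neg_zero]; positivity
  have hsplit : ∑' m, f (m + k) = ∑' i, f i := by
    apply Function.Injective.tsum_eq (add_left_injective k)
    intro i hi
    have hki : k ≤ i := by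
      by_contra hc
      simp [hf, hc] at hi
    exact ⟨i - k, Nat.sub_add_cancel hki⟩
  set C : ℝ := Real.exp (-((k:ℝ)+1) ^ (1+q) / (2*σ^2)) with hC
  have hC0 : 0 < C := Real.exp_pos _
  have hterm : ∀ m : ℕ, f (m + k) ≤ ENNReal.ofReal C * (ENNReal.ofReal r) ^ m := by
    intro m
    have hk : k ≤ m + k := Nat.le_add_left k m
    rw [hf]
    simp only [hk, if_true]
    have hgap := my_rpow_gap hq
      (show (1:ℝ) ≤ (k:ℝ)+1 by have := Nat.cast_nonneg (α := ℝ) k; linarith)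
      (show ((k:ℝ)+1) ≤ ((m+k:ℕ):ℝ)+1 by push_cast; linarith [Nat.cast_nonneg (α := ℝ) m])
    have hle : Real.exp (-(((m+k:ℕ):ℝ)+1) ^ (1+q) / (2*σ^2)) ≤ C * r ^ m := by
      rw [hC, hr, ← Real.exp_nat_mul, ← Real.exp_add]
      apply Real.exp_le_exp.mpr
      rw [div_le_iff₀ hs] at *
      have : ((m+k:ℕ):ℝ) = (m:ℝ) + k := by push_cast; ring
      rw [this] at hgap ⊢
      have h2 : (-((k:ℝ)+1) ^ (1+q) / (2*σ^2) + (m:ℝ) * -(1/(2*σ^2))) * (2*σ^2)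
          = -((k:ℝ)+1) ^ (1+q) - m := by field_simp; ring
      rw [h2]
      linarith
    calc ENNReal.ofReal (Real.exp (-(((m+k:ℕ):ℝ)+1) ^ (1+q) / (2*σ^2)))
        ≤ ENNReal.ofReal (C * r ^ m) := ENNReal.ofReal_le_ofReal hle
      _ = ENNReal.ofReal C * (ENNReal.ofReal r) ^ m := by
          rw [ENNReal.ofReal_mul hC0.le, ENNReal.ofReal_pow hr0.le]
  have hgeo : ∑' m : ℕ, ENNReal.ofReal C * (ENNReal.ofReal r) ^ m
      = ENNReal.ofReal C * (1 - ENNReal.ofReal r)⁻¹ := by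
    rw [ENNReal.tsum_mul_left, ENNReal.tsum_geometric]
  have hinv : (1 - ENNReal.ofReal r)⁻¹ ≤ ENNReal.ofReal (2*σ^2+1) := by
    have h1 : (1 : ℝ≥0∞) - ENNReal.ofReal r = ENNReal.ofReal (1 - r) := by
      rw [ENNReal.ofReal_sub _ hr0.le, ENNReal.ofReal_one]
    rw [h1, ← ENNReal.ofReal_inv_of_pos (by linarith)]
    apply ENNReal.ofReal_le_ofReal
    rw [inv_le_iff_one_le_mul₀ (by linarith)]
    have hx := Real.add_one_le_exp (1/(2*σ^2))
    have hE : r = (Real.exp (1/(2*σ^2)))⁻¹ := by rw [hr, Real.exp_neg]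
    have hE0 : 0 < Real.exp (1/(2*σ^2)) := Real.exp_pos _
    rw [hE]
    have hEi : (1 : ℝ) - (Real.exp (1/(2*σ^2)))⁻¹
        = (Real.exp (1/(2*σ^2)) - 1) / Real.exp (1/(2*σ^2)) := by field_simp
    rw [hEi, show (2*σ^2+1) * ((Real.exp (1/(2*σ^2)) - 1) / Real.exp (1/(2*σ^2)))
        = ((2*σ^2+1) * (Real.exp (1/(2*σ^2)) - 1)) / Real.exp (1/(2*σ^2)) from by ring,
      le_div_iff₀ hE0, one_mul]
    have h1t : (2*σ^2) * (1/(2*σ^2)) = 1 := mul_one_div_cancel (ne_of_gt hs)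
    nlinarith [mul_le_mul_of_nonneg_left hx hs.le]
  calc ∑' i, f i = ∑' m, f (m + k) := hsplit.symm
    _ ≤ ∑' m : ℕ, ENNReal.ofReal C * (ENNReal.ofReal r) ^ m := ENNReal.tsum_le_tsum hterm
    _ = ENNReal.ofReal C * (1 - ENNReal.ofReal r)⁻¹ := hgeo
    _ ≤ ENNReal.ofReal C * ENNReal.ofReal (2*σ^2+1) := mul_le_mul_right hinv _
    _ = ENNReal.ofReal ((2*σ^2+1) * C) := by
        rw [← ENNReal.ofReal_mul hC0.le, mul_comm]

theorem stmt_1 {Ω : Type*} [MeasurableSpace Ω] (μ : Measure Ω) [IsProbabilityMeasure μ]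
    (σ q : ℝ) (hσ : 0 < σ) (hq : 0 ≤ q) (D : ℕ → Ω → ℝ)
    (hmeas : ∀ i, Measurable (D i))
    (hnn : ∀ i ω, 0 ≤ D i ω)
    (hindep : iIndepFun D μ)
    (htail : ∀ i : ℕ, ∀ x : ℝ, 1 ≤ x →
      μ {ω | x ≤ D i ω} ≤ ENNReal.ofReal (Real.exp (-x ^ (1 + q) / (2 * σ ^ 2))))
    (j : ℕ) (hj : 1 ≤ j) :
    μ {ω | (j : ℝ≥0∞) ≤ ∑' i : ℕ,
        Set.indicator {ω' | ((i : ℝ) + 1) ≤ D (i + 1) ω'} (fun _ => (1 : ℝ≥0∞)) ω}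
      ≤ ENNReal.ofReal ((2 * σ ^ 2 + 1) ^ j *
          Real.exp (-((j : ℝ) - 1) ^ (2 + q) / (2 * (2 + q) * σ ^ 2))) := by
  classical
  set A : ℕ → Set Ω := fun i => {ω | ((i : ℝ) + 1) ≤ D (i + 1) ω} with hA
  set c : ℕ → ℝ≥0∞ := fun i =>
    ENNReal.ofReal (Real.exp (-((i:ℝ)+1) ^ (1+q) / (2*σ^2))) with hc
  set h : Fin j → ℕ → ℝ≥0∞ := fun k i => if (k:ℕ) ≤ i then c i else 0 with hh
  -- Step 1: inclusion into union over strictly monotone tuples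
  have hsub : {ω | (j : ℝ≥0∞) ≤ ∑' i : ℕ,
        Set.indicator {ω' | ((i : ℝ) + 1) ≤ D (i + 1) ω'} (fun _ => (1 : ℝ≥0∞)) ω}
      ⊆ ⋃ f : {f : Fin j → ℕ // StrictMono f}, ⋂ k : Fin j, A (f.1 k) := by
    intro ω hω
    have hω' : (j : ℝ≥0∞) ≤ ∑' i : ℕ,
        Set.indicator {i' : ℕ | ((i' : ℝ) + 1) ≤ D (i' + 1) ω} (fun _ => (1:ℝ≥0∞)) i := by
      refine le_trans hω (le_of_eq (tsum_congr fun i => ?_))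
      simp only [Set.indicator_apply, Set.mem_setOf_eq]
    set S : Set ℕ := {i' : ℕ | ((i' : ℝ) + 1) ≤ D (i' + 1) ω} with hS
    have hT : ∃ t : Finset ℕ, ↑t ⊆ S ∧ t.card = j := by
      by_cases hfin : S.Finite
      · have heq : ∑' i, Set.indicator S (fun _ => (1:ℝ≥0∞)) i
            = (hfin.toFinset.card : ℝ≥0∞) := by
          rw [tsum_eq_sum (s := hfin.toFinset)
            (fun b hb => Set.indicator_of_notMem (by simpa using hb) _)]
          rw [Finset.sum_congr rfl (fun i hi => Set.indicator_of_mem (by simpa using hi) _)]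
          simp
        rw [heq] at hω'
        have hj' : j ≤ hfin.toFinset.card := Nat.cast_le.mp hω'
        obtain ⟨t, hts, htc⟩ := Finset.exists_subset_card_eq hj'
        exact ⟨t, fun x hx => hfin.mem_toFinset.mp (hts hx), htc⟩
      · obtain ⟨t, hts, htc⟩ := Set.Infinite.exists_subset_card_eq hfin j
        exact ⟨t, hts, htc⟩
    obtain ⟨t, hts, htc⟩ := hT
    refine Set.mem_iUnion.mpr ⟨⟨fun k => t.orderEmbOfFin htc k,
      (t.orderEmbOfFin htc).strictMono⟩, ?_⟩
    refine Set.mem_iInter.mpr fun k => ?_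
    exact hts (Finset.orderEmbOfFin_mem t htc k)
  -- Step 2: per-tuple bound via independence
  have hprod : ∀ f : Fin j → ℕ, StrictMono f →
      μ (⋂ k : Fin j, A (f k)) ≤ ∏ k : Fin j, c (f k) := by
    intro f hf
    have hinj : Function.Injective (fun k : Fin j => f k + 1) := by
      intro a b hab
      have hab' : f a + 1 = f b + 1 := hab
      exact hf.injective (by omega)
    set t : Finset ℕ := Finset.image (fun k => f k + 1) Finset.univ with ht
    have heq : (⋂ k : Fin j, A (f k)) = ⋂ i ∈ t, D i ⁻¹' Set.Ici (i:ℝ) := by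
      ext ω
      simp only [Set.mem_iInter, ht, Finset.mem_image, Finset.mem_univ, true_and,
        Set.mem_preimage, Set.mem_Ici, hA, Set.mem_setOf_eq]
      constructor
      · rintro hh' i ⟨k, rfl⟩
        have := hh' k
        push_cast
        linarith
      · intro hh' k
        have := hh' (f k + 1) ⟨k, rfl⟩
        push_cast at this
        linarith
    have hmul := iIndepFun_iff_measure_inter_preimage_eq_mul.mp hindep t
      (sets := fun i => Set.Ici (i:ℝ)) (fun i _ => measurableSet_Ici)
    rw [heq, hmul, Finset.prod_image (fun a _ b _ hab => hinj hab)]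
    apply Finset.prod_le_prod'
    intro k _
    have h1 : (1:ℝ) ≤ ((f k + 1 : ℕ):ℝ) := by
      push_cast; linarith [Nat.cast_nonneg (α := ℝ) (f k)]
    have hb := htail (f k + 1) ((f k + 1 : ℕ):ℝ) h1
    calc μ (D (f k + 1) ⁻¹' Set.Ici ((f k + 1 : ℕ):ℝ))
        = μ {ω | ((f k + 1 : ℕ):ℝ) ≤ D (f k + 1) ω} := rfl
      _ ≤ ENNReal.ofReal (Real.exp (-((f k + 1 : ℕ):ℝ) ^ (1+q) / (2*σ^2))) := hb
      _ = c (f k) := by rw [hc]; push_cast; norm_num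
  -- Step 3: key for strictly monotone tuples: k ≤ f k
  have hk_le : ∀ (f : Fin j → ℕ), StrictMono f → ∀ k : Fin j, (k:ℕ) ≤ f k := by
    intro f hf
    have : ∀ n : ℕ, ∀ hn : n < j, n ≤ f ⟨n, hn⟩ := by
      intro n
      induction n with
      | zero => intro hn; exact Nat.zero_le _
      | succ m ihm =>
        intro hn
        have hm : m < j := Nat.lt_of_succ_lt hn
        have h1 := ihm hm
        have hlt : f ⟨m, hm⟩ < f ⟨m+1, hn⟩ := hf (by simp [Fin.lt_def])
        omega
    intro k
    exact this k.1 k.2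
  -- Step 4: assemble
  calc μ {ω | (j : ℝ≥0∞) ≤ ∑' i : ℕ,
        Set.indicator {ω' | ((i : ℝ) + 1) ≤ D (i + 1) ω'} (fun _ => (1 : ℝ≥0∞)) ω}
      ≤ μ (⋃ f : {f : Fin j → ℕ // StrictMono f}, ⋂ k : Fin j, A (f.1 k)) :=
        measure_mono hsub
    _ ≤ ∑' f : {f : Fin j → ℕ // StrictMono f}, μ (⋂ k : Fin j, A (f.1 k)) :=
        measure_iUnion_le _
    _ ≤ ∑' f : {f : Fin j → ℕ // StrictMono f}, ∏ k : Fin j, c (f.1 k) :=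
        ENNReal.tsum_le_tsum fun f => hprod f.1 f.2
    _ ≤ ∑' g : Fin j → ℕ, ∏ k : Fin j, h k (g k) := by
        apply ENNReal.summable.tsum_le_tsum_of_inj (Subtype.val) Subtype.val_injective
          (fun _ _ => zero_le) _ ENNReal.summable
        intro f
        apply le_of_eq
        apply Finset.prod_congr rfl
        intro k _
        rw [hh]
        simp [hk_le f.1 f.2 k]
    _ = ∏ k : Fin j, ∑' i : ℕ, h k i := my_tsum_pi_prod j h
    _ ≤ ∏ k : Fin j, ENNReal.ofReal ((2*σ^2+1) *
          Real.exp (-(((k:ℕ):ℝ)+1) ^ (1+q) / (2*σ^2))) := by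
        apply Finset.prod_le_prod'
        intro k _
        exact my_tail_sum hσ hq (k:ℕ)
    _ ≤ ENNReal.ofReal ((2 * σ ^ 2 + 1) ^ j *
          Real.exp (-((j : ℝ) - 1) ^ (2 + q) / (2 * (2 + q) * σ ^ 2))) := by
        rw [← ENNReal.ofReal_prod_of_nonneg (fun i _ => by positivity)]
        apply ENNReal.ofReal_le_ofReal
        rw [Finset.prod_mul_distrib, Finset.prod_const, Finset.card_univ, Fintype.card_fin,
          ← Real.exp_sum]
        apply mul_le_mul_of_nonneg_left _ (by positivity)
        apply Real.exp_le_exp.mpr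
        have hrw : ∑ k : Fin j, -(((k:ℕ):ℝ)+1) ^ (1+q) / (2*σ^2)
            = -(∑ k ∈ Finset.range j, ((k:ℝ)+1) ^ (1+q)) / (2*σ^2) := by
          rw [Fin.sum_univ_eq_sum_range (fun n => -((n:ℝ)+1) ^ (1+q) / (2*σ^2)) j]
          rw [← Finset.sum_div, ← Finset.sum_neg_distrib]
        rw [hrw]
        have hsum := my_sum_pow_lower hq j
        have hj1 : ((j:ℝ) - 1) ^ (2+q) ≤ (j:ℝ) ^ (2+q) := by
          apply Real.rpow_le_rpow
          · have : (1:ℝ) ≤ (j:ℝ) := by exact_mod_cast hj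
            linarith
          · linarith
          · linarith
        have hS0 : (0:ℝ) ≤ ∑ k ∈ Finset.range j, ((k:ℝ)+1) ^ (1+q) := by
          apply Finset.sum_nonneg
          intro i _
          positivity
        rw [div_le_div_iff₀ (by positivity) (by positivity), neg_mul, neg_mul,
          neg_le_neg_iff]
        nlinarith [mul_le_mul_of_nonneg_right (le_trans hj1 hsum)
          (by positivity : (0:ℝ) ≤ 2*σ^2)]
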